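/- arXiv:1105.4272 — 2 statements merged into one kernel-verified Lean document; each statement's English description precedes it below -/
import Mathlib

section
/- Let V be a finite set, and for each i ≤ n let W(Q_i) be a probability vector on V, and |S_i - p_i| ≤ 1. If the forecasts p_i satisfy Σ_{v∈V} W_v(Q_i) μ_{i-1}(v) · (S_i - p_i) ≤ 0 for every i ≤ n (where μ_m(v) = Σ_{j=1}^m W_v(Q_j)(S_j - p_j)), then Σ_{v∈V} μ_n(v)² ≤ n. -/
/-- If the forecasts make each increment non-positive, the sum of squared
calibration deficits grows at most linearly. -/
theorem stmt_2 {V : Type*} [Fintype V] (W : ℕ → V → ℝ) (S p : ℕ → ℝ)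
    (μ : ℕ → V → ℝ)
    (hW0 : ∀ i v, 0 ≤ W i v) (hW1 : ∀ i, ∑ v, W i v = 1)
    (hSp : ∀ i, |S i - p i| ≤ 1)
    (hμ : ∀ m v, μ m v = ∑ j ∈ Finset.Icc 1 m, W j v * (S j - p j))
    (n : ℕ)
    (horth : ∀ i, 1 ≤ i → i ≤ n → (∑ v, W i v * μ (i - 1) v) * (S i - p i) ≤ 0) :
    ∑ v, (μ n v) ^ 2 ≤ (n : ℝ) := by
  induction n with
  | zero =>
    simp [hμ]
  | succ m ih =>
    have hstep : ∀ v, μ (m + 1) v = μ m v + W (m + 1) v * (S (m + 1) - p (m + 1)) := by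
      intro v
      rw [hμ, hμ, Finset.sum_Icc_succ_top (by omega : 1 ≤ m + 1)]
    have hWle1 : ∀ v, W (m + 1) v ≤ 1 := by
      intro v
      have := Finset.single_le_sum (f := W (m + 1)) (fun w _ => hW0 (m+1) w)
        (Finset.mem_univ v)
      linarith [hW1 (m + 1)]
    have hsq : ∀ v, (μ (m+1) v)^2 = (μ m v)^2
        + 2 * (W (m+1) v * μ m v) * (S (m+1) - p (m+1))
        + (W (m+1) v)^2 * (S (m+1) - p (m+1))^2 := by
      intro v; rw [hstep v]; ring
    have hsum : ∑ v, (μ (m+1) v)^2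
        = (∑ v, (μ m v)^2)
          + 2 * (∑ v, W (m+1) v * μ m v) * (S (m+1) - p (m+1))
          + (∑ v, (W (m+1) v)^2) * (S (m+1) - p (m+1))^2 := by
      simp only [hsq, Finset.sum_add_distrib, Finset.sum_mul, Finset.mul_sum]
    have h1 : (∑ v, (μ m v)^2) ≤ (m : ℝ) :=
      ih (fun i hi him => horth i hi (by omega))
    have h2 : 2 * (∑ v, W (m+1) v * μ m v) * (S (m+1) - p (m+1)) ≤ 0 := by
      have := horth (m + 1) (by omega) le_rfl
      simp only [Nat.add_sub_cancel] at this
      linarith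
    have h3 : (∑ v, (W (m+1) v)^2) * (S (m+1) - p (m+1))^2 ≤ 1 := by
      have hs : (∑ v, (W (m+1) v)^2) ≤ 1 := by
        calc (∑ v, (W (m+1) v)^2) ≤ ∑ v, W (m+1) v := by
              apply Finset.sum_le_sum
              intro v _
              nlinarith [hW0 (m+1) v, hWle1 v]
          _ = 1 := hW1 (m + 1)
      have hd : (S (m+1) - p (m+1))^2 ≤ 1 := by
        have := hSp (m + 1)
        nlinarith [abs_nonneg (S (m+1) - p (m+1)), sq_abs (S (m+1) - p (m+1))]
      have hs0 : 0 ≤ (∑ v, (W (m+1) v)^2) :=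
        Finset.sum_nonneg fun v _ => sq_nonneg _
      nlinarith [sq_nonneg (S (m+1) - p (m+1))]
    rw [hsum]
    push_cast
    linarith
end

section
/- Let (V_i) be a martingale difference sequence with V_i contained in an F_{i-1}-measurable interval of length 1, and S_k = Σ_{i=1}^k V_i. Then for any t > 0 and any n ≥ 1, P(sup_{k≥n} |S_k/k| > t) ≤ t^{-2}·exp(-2nt²). -/
open MeasureTheory Filter Real

namespace StmtAux

lemma d_pos {p : ℝ} (h0 : 0 ≤ p) (h1 : p ≤ 1) (x : ℝ) : 0 < 1 - p + p * Real.exp x := by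
  have hE := Real.exp_pos x
  rcases eq_or_lt_of_le h0 with h | h
  · simp [← h]
  · nlinarith [mul_pos h hE]

private lemma hasDerivAt_D (p : ℝ) (x : ℝ) :
    HasDerivAt (fun y => 1 - p + p * Real.exp y) (p * Real.exp x) x :=
  ((Real.hasDerivAt_exp x).const_mul p).const_add (1 - p)

/-- derivative bound: the "q" function has value in `[0,1]`, derivative `q(1-q) ≤ 1/4`. -/
private lemma G_mono {p : ℝ} (h0 : 0 ≤ p) (h1 : p ≤ 1) :
    Monotone (fun x => p + x / 4 - p * Real.exp x / (1 - p + p * Real.exp x)) := by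
  have hq : ∀ x : ℝ, HasDerivAt (fun y => p * Real.exp y / (1 - p + p * Real.exp y))
      ((p * Real.exp x * (1 - p + p * Real.exp x) - p * Real.exp x * (p * Real.exp x)) /
        (1 - p + p * Real.exp x) ^ 2) x := fun x =>
    ((Real.hasDerivAt_exp x).const_mul p).div (hasDerivAt_D p x) (d_pos h0 h1 x).ne'
  have hG : ∀ x : ℝ, HasDerivAt (fun y => p + y / 4 - p * Real.exp y / (1 - p + p * Real.exp y))
      (1 / 4 - (p * Real.exp x * (1 - p + p * Real.exp x) - p * Real.exp x * (p * Real.exp x)) /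
        (1 - p + p * Real.exp x) ^ 2) x := fun x => by
    exact (((hasDerivAt_id x).div_const 4).const_add p).sub (hq x)
  refine monotone_of_deriv_nonneg (fun x => (hG x).differentiableAt) (fun x => ?_)
  rw [(hG x).deriv]
  set E := p * Real.exp x with hE
  have hD := d_pos h0 h1 x
  set D := 1 - p + p * Real.exp x with hDdef
  have hE0 : 0 ≤ E := mul_nonneg h0 (Real.exp_pos x).le
  have hED : E ≤ D := by simp only [hDdef, hE]; nlinarith
  have key : (E * D - E * E) ≤ D ^ 2 / 4 := by nlinarith [sq_nonneg (D - 2 * E)]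
  have : (E * D - E * E) / D ^ 2 ≤ 1 / 4 := by
    rw [div_le_div_iff₀ (by positivity) (by norm_num)]
    nlinarith
  linarith

/-- Hoeffding's lemma, pointwise form. -/
lemma hoeffding_pointwise {p l : ℝ} (h0 : 0 ≤ p) (h1 : p ≤ 1) (hl : 0 ≤ l) :
    Real.log (1 - p + p * Real.exp l) ≤ l * p + l ^ 2 / 8 := by
  have hW : ∀ x : ℝ, HasDerivAt (fun y => y * p + y ^ 2 / 8 - Real.log (1 - p + p * Real.exp y))
      (p + x / 4 - p * Real.exp x / (1 - p + p * Real.exp x)) x := fun x => by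
    have h1' : HasDerivAt (fun y : ℝ => y * p + y ^ 2 / 8) (p + x / 4) x := by
      have := ((hasDerivAt_id x).mul_const p).add ((hasDerivAt_pow 2 x).div_const 8)
      exact this.congr_deriv (by simp; ring)
    have h2' := (hasDerivAt_D p x).log (d_pos h0 h1 x).ne'
    exact h1'.sub h2'
  have hmono : MonotoneOn (fun y => y * p + y ^ 2 / 8 - Real.log (1 - p + p * Real.exp y))
      (Set.Ici (0 : ℝ)) := by
    refine monotoneOn_of_deriv_nonneg (convex_Ici 0)
      (fun x _ => (hW x).continuousAt.continuousWithinAt)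
      (fun x _ => (hW x).differentiableAt.differentiableWithinAt) ?_
    intro x hx
    rw [interior_Ici] at hx
    rw [(hW x).deriv]
    have := G_mono h0 h1 (le_of_lt hx)
    simpa using this
  have h0' : (fun y : ℝ => y * p + y ^ 2 / 8 - Real.log (1 - p + p * Real.exp y)) 0 = 0 := by
    simp
  have := hmono (Set.self_mem_Ici) (Set.mem_Ici.2 hl) hl
  rw [h0'] at this
  simp only at this
  linarith


/-- Tangent-line bound on the log-mgf, exact for the worst `p`. -/
lemma tangent_bound {p l : ℝ} (h0 : 0 ≤ p) (h1 : p ≤ 1) (hl : 0 < l) :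
    Real.log (1 - p + p * Real.exp l) ≤
      l * p + (Real.log ((Real.exp l - 1) / l) + ((Real.exp l - 1) / l)⁻¹ - 1) := by
  have hel : l + 1 ≤ Real.exp l := Real.add_one_le_exp l
  have hc : 0 < (Real.exp l - 1) / l := by
    apply div_pos; linarith; exact hl
  set c := (Real.exp l - 1) / l with hcdef
  have hx : 0 < 1 - p + p * Real.exp l := d_pos h0 h1 l
  have hlog : Real.log ((1 - p + p * Real.exp l) / c) ≤ (1 - p + p * Real.exp l) / c - 1 :=
    Real.log_le_sub_one_of_pos (div_pos hx hc)
  rw [Real.log_div hx.ne' hc.ne'] at hlog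
  have hkey : (1 - p + p * Real.exp l) / c = p * l + c⁻¹ := by
    have hE0 : (-1 : ℝ) + Real.exp l ≠ 0 := by nlinarith
    have hE0' : Real.exp l - 1 ≠ 0 := by nlinarith
    rw [hcdef]
    field_simp
    ring
  rw [hkey] at hlog
  linarith

lemma exp_29_5_ub : Real.exp (29/5 : ℝ) ≤ 330.44 := by
  have h1 : (29/5 : ℝ) = 5 + 4/5 := by norm_num
  rw [h1, Real.exp_add]
  have h5 : Real.exp 5 ≤ 2.7182818286 ^ 5 := by
    have : Real.exp 5 = Real.exp 1 ^ 5 := by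
      rw [← Real.exp_nat_mul]; norm_num
    rw [this]
    exact pow_le_pow_left₀ (Real.exp_pos 1).le Real.exp_one_lt_d9.le 5
  have h45 : Real.exp (4/5 : ℝ) ≤ 2.2256 := by
    have := Real.exp_bound' (x := 4/5) (by norm_num) (by norm_num) (n := 6) (by norm_num)
    refine this.trans ?_
    norm_num [Finset.sum_range_succ, Nat.factorial]
  calc Real.exp 5 * Real.exp (4/5:ℝ) ≤ 2.7182818286 ^ 5 * 2.2256 := by
        apply mul_le_mul h5 h45 (Real.exp_pos _).le (by positivity)
    _ ≤ 330.44 := by norm_num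

lemma log_284_5_ub : Real.log (284/5 : ℝ) ≤ 4041/1000 := by
  rw [Real.log_le_iff_le_exp (by norm_num)]
  have h1 : (4041/1000 : ℝ) = 4 + 41/1000 := by norm_num
  rw [h1, Real.exp_add]
  have h4 : (2.7182818283 : ℝ) ^ 4 ≤ Real.exp 4 := by
    have : Real.exp 4 = Real.exp 1 ^ 4 := by
      rw [← Real.exp_nat_mul]; norm_num
    rw [this]
    exact pow_le_pow_left₀ (by norm_num) Real.exp_one_gt_d9.le 4
  have h41 : (1 + 41/1000 : ℝ) ≤ Real.exp (41/1000 : ℝ) := by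
    have := Real.add_one_le_exp (41/1000 : ℝ); linarith
  calc (284/5 : ℝ) ≤ 2.7182818283 ^ 4 * (1 + 41/1000) := by norm_num
    _ ≤ Real.exp 4 * Real.exp (41/1000) := by
        apply mul_le_mul h4 h41 (by norm_num) (Real.exp_pos _).le

/-- Numeric bound on the optimal log-mgf constant at `l = 29/5`. -/
lemma psi_num :
    Real.log ((Real.exp (29/5:ℝ) - 1) / (29/5)) + ((Real.exp (29/5:ℝ) - 1) / (29/5))⁻¹ - 1
      ≤ 3059/1000 := by
  set c := (Real.exp (29/5:ℝ) - 1) / (29/5) with hcdef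
  have hc1 : 1 ≤ c := by
    rw [hcdef, le_div_iff₀ (by norm_num)]
    have := Real.add_one_le_exp (29/5 : ℝ)
    linarith
  have hcub : c ≤ 284/5 := by
    rw [hcdef, div_le_iff₀ (by norm_num)]
    have := exp_29_5_ub
    norm_num at this ⊢
    linarith
  have hc0 : 0 < c := by linarith
  -- monotonicity of `log x + x⁻¹` on `[1, ∞)`
  have hmono : Real.log c + c⁻¹ ≤ Real.log (284/5) + (284/5 : ℝ)⁻¹ := by
    have hlow : 1 - ((284/5) / c)⁻¹ ≤ Real.log ((284/5) / c) :=
      Real.one_sub_inv_le_log_of_pos (by positivity)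
    rw [Real.log_div (by norm_num) hc0.ne'] at hlow
    have hinv : ((284/5 : ℝ) / c)⁻¹ = c * (5/284) := by
      rw [inv_div]; ring
    rw [hinv] at hlow
    have : c⁻¹ - (284/5 : ℝ)⁻¹ ≤ 1 - c * (5/284) := by
      rw [sub_le_iff_le_add]
      have hcc : c * c⁻¹ = 1 := mul_inv_cancel₀ hc0.ne'
      nlinarith [mul_pos hc0 hc0]
    linarith
  have := log_284_5_ub
  have : Real.log c + c⁻¹ ≤ 4041/1000 + (284/5 : ℝ)⁻¹ := by
    refine hmono.trans ?_; linarith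
  norm_num at this ⊢
  linarith


lemma log_2125_ub : Real.log (21/25 : ℝ) ≤ -(174/1000 : ℝ) := by
  have hexp : Real.exp (174/1000 : ℝ) ≤ 25/21 := by
    have := Real.exp_bound' (x := 174/1000) (by norm_num) (by norm_num) (n := 4) (by norm_num)
    refine this.trans ?_
    norm_num [Finset.sum_range_succ, Nat.factorial]
  rw [Real.log_le_iff_le_exp (by norm_num), Real.exp_neg]
  rw [le_inv_comm₀ (by norm_num) (Real.exp_pos _)]
  refine hexp.trans (by norm_num)

lemma caseB_poly {t : ℝ} (h3 : 0 < t) (h2 : t ≤ 1) (h1 : 1/2 < t^2) :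
    Real.log 2 + 2 * Real.log t ≤ (29/5)*t - 3059/1000 - 2*t^2 := by
  have hlt : Real.log t ≤ Real.log (21/25) + (25/21)*t - 1 := by
    have hd : Real.log (t / (21/25)) ≤ t / (21/25) - 1 :=
      Real.log_le_sub_one_of_pos (by positivity)
    rw [Real.log_div h3.ne' (by norm_num)] at hd
    have : t / (21/25 : ℝ) = (25/21) * t := by ring
    rw [this] at hd
    linarith
  have h2125 := log_2125_ub
  have hlog2 := Real.log_two_lt_d9.le
  have hs : Real.sqrt (1/2) ≤ t := by
    have h := Real.sqrt_le_sqrt h1.le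
    rwa [Real.sqrt_sq h3.le] at h
  have hs1 : (0.707 : ℝ) < Real.sqrt (1/2) :=
    (Real.lt_sqrt (by norm_num)).2 (by norm_num)
  have ht7 : (0.707 : ℝ) ≤ t := by linarith
  nlinarith [mul_nonneg (sub_nonneg.2 ht7) (sub_nonneg.2 h2)]


variable {Ω : Type*} {m0 : MeasurableSpace Ω}

/-- From the martingale-difference property, the predictable interval must a.e. straddle `0`. -/
lemma avals (μ : Measure Ω) [IsProbabilityMeasure μ]
    (F : Filtration ℕ m0) (V A : ℕ → Ω → ℝ)
    (hint : ∀ i, Integrable (V i) μ)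
    (hmd : ∀ i, 1 ≤ i → μ[V i | F (i - 1)] =ᵐ[μ] 0)
    (hA : ∀ i, 1 ≤ i → StronglyMeasurable[F (i - 1)] (A i))
    (hrange : ∀ i, ∀ᵐ ω ∂μ, V i ω ∈ Set.Icc (A i ω) (A i ω + 1))
    (i : ℕ) (hi : 1 ≤ i) : ∀ᵐ ω ∂μ, -1 ≤ A i ω ∧ A i ω ≤ 0 := by
  have hAm : Measurable[F (i-1)] (A i) := (hA i hi).measurable
  -- upper bound
  have hup : μ {ω | 0 < A i ω} = 0 := by
    have hsm : MeasurableSet[F (i-1)] {ω | 0 < A i ω} := measurableSet_lt measurable_const hAm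
    have hsm0 : MeasurableSet {ω | 0 < A i ω} := F.le (i-1) _ hsm
    have hzero : ∫ ω in {ω | 0 < A i ω}, V i ω ∂μ = 0 := by
      rw [← setIntegral_condExp (F.le (i-1)) (hint i) hsm]
      rw [setIntegral_congr_ae hsm0 ((hmd i hi).mono fun ω h _ => h)]
      simp
    have hpos : ∀ᵐ ω ∂(μ.restrict {ω | 0 < A i ω}), 0 < V i ω := by
      rw [ae_restrict_iff' hsm0]
      filter_upwards [hrange i] with ω hω hmem
      exact lt_of_lt_of_le hmem hω.1
    have hnn : 0 ≤ᵐ[μ.restrict {ω | 0 < A i ω}] V i := hpos.mono fun ω h => h.le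
    have hVz : V i =ᵐ[μ.restrict {ω | 0 < A i ω}] 0 :=
      (integral_eq_zero_iff_of_nonneg_ae hnn ((hint i).restrict)).1 hzero
    have : ∀ᵐ ω ∂(μ.restrict {ω | 0 < A i ω}), False := by
      filter_upwards [hpos, hVz] with ω h1 h2
      rw [h2] at h1; exact lt_irrefl 0 h1
    have h0 := ae_iff.1 this
    simpa [Measure.restrict_apply MeasurableSet.univ] using h0
  -- lower bound
  have hlo : μ {ω | A i ω < -1} = 0 := by
    have hsm : MeasurableSet[F (i-1)] {ω | A i ω < -1} := measurableSet_lt hAm measurable_const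
    have hsm0 : MeasurableSet {ω | A i ω < -1} := F.le (i-1) _ hsm
    have hzero : ∫ ω in {ω | A i ω < -1}, (-(V i ω)) ∂μ = 0 := by
      rw [integral_neg, neg_eq_zero]
      rw [← setIntegral_condExp (F.le (i-1)) (hint i) hsm]
      rw [setIntegral_congr_ae hsm0 ((hmd i hi).mono fun ω h _ => h)]
      simp
    have hpos : ∀ᵐ ω ∂(μ.restrict {ω | A i ω < -1}), 0 < -(V i ω) := by
      rw [ae_restrict_iff' hsm0]
      filter_upwards [hrange i] with ω hω hmem
      have h2 := hω.2
      have h3 : A i ω < -1 := hmem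
      linarith
    have hnn : 0 ≤ᵐ[μ.restrict {ω | A i ω < -1}] fun ω => -(V i ω) := hpos.mono fun ω h => h.le
    have hVz : (fun ω => -(V i ω)) =ᵐ[μ.restrict {ω | A i ω < -1}] 0 :=
      (integral_eq_zero_iff_of_nonneg_ae hnn ((hint i).neg.restrict)).1 hzero
    have : ∀ᵐ ω ∂(μ.restrict {ω | A i ω < -1}), False := by
      filter_upwards [hpos, hVz] with ω h1 h2
      rw [h2] at h1; exact lt_irrefl 0 h1
    have h0 := ae_iff.1 this
    simpa [Measure.restrict_apply MeasurableSet.univ] using h0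
  have h1 : ∀ᵐ ω ∂μ, ¬ (0 < A i ω) := by
    rw [ae_iff]; simpa using hup
  have h2 : ∀ᵐ ω ∂μ, ¬ (A i ω < -1) := by
    rw [ae_iff]; simpa using hlo
  filter_upwards [h1, h2] with ω hω1 hω2
  exact ⟨not_lt.1 hω2, not_lt.1 hω1⟩


/-- Chord bound for the exponential on an interval of length 1. -/
lemma chord {l a v : ℝ} (h1 : a ≤ v) (h2 : v ≤ a + 1) :
    Real.exp (l * v) ≤ ((a + 1) * Real.exp (l * a) - a * Real.exp (l * (a + 1)))
      + (Real.exp (l * (a + 1)) - Real.exp (l * a)) * v := by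
  have key := convexOn_exp.2 (Set.mem_univ (l * a)) (Set.mem_univ (l * (a + 1)))
    (by linarith : (0:ℝ) ≤ a + 1 - v) (by linarith : (0:ℝ) ≤ v - a) (by ring)
  simp only [smul_eq_mul] at key
  rw [show (a + 1 - v) * (l * a) + (v - a) * (l * (a + 1)) = l * v by ring] at key
  calc Real.exp (l * v) ≤ (a + 1 - v) * Real.exp (l * a) + (v - a) * Real.exp (l * (a + 1)) := key
    _ = _ := by ring

lemma c1_bound {l K a : ℝ} (ha1 : -1 ≤ a) (ha0 : a ≤ 0)
    (hb : Real.log (1 - (-a) + (-a) * Real.exp l) ≤ l * (-a) + K) :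
    (a + 1) * Real.exp (l * a) - a * Real.exp (l * (a + 1)) ≤ Real.exp K := by
  have hd : 0 < 1 - (-a) + (-a) * Real.exp l := d_pos (by linarith) (by linarith) l
  have hx : 1 - (-a) + (-a) * Real.exp l ≤ Real.exp (l * (-a) + K) :=
    (Real.log_le_iff_le_exp hd).1 hb
  have hfac : (a + 1) * Real.exp (l * a) - a * Real.exp (l * (a + 1)) =
      Real.exp (l * a) * (1 - (-a) + (-a) * Real.exp l) := by
    rw [show l * (a + 1) = l * a + l by ring, Real.exp_add]
    ring
  rw [hfac]
  calc Real.exp (l * a) * (1 - (-a) + (-a) * Real.exp l)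
      ≤ Real.exp (l * a) * Real.exp (l * (-a) + K) := by
        exact mul_le_mul_of_nonneg_left hx (Real.exp_pos _).le
    _ = Real.exp K := by rw [← Real.exp_add]; congr 1; ring

open Real in
lemma oneSided (μ : Measure Ω) [IsProbabilityMeasure μ]
    (F : Filtration ℕ m0) (V A : ℕ → Ω → ℝ)
    (hadp : ∀ i, StronglyMeasurable[F i] (V i))
    (hint : ∀ i, Integrable (V i) μ)
    (hmd : ∀ i, 1 ≤ i → μ[V i | F (i - 1)] =ᵐ[μ] 0)
    (hA : ∀ i, 1 ≤ i → StronglyMeasurable[F (i - 1)] (A i))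
    (hrange : ∀ i, ∀ᵐ ω ∂μ, V i ω ∈ Set.Icc (A i ω) (A i ω + 1))
    (l K t : ℝ) (hl : 0 < l)
    (hgK : ∀ p : ℝ, 0 ≤ p → p ≤ 1 → Real.log (1 - p + p * Real.exp l) ≤ l * p + K)
    (ht : 0 < t) (hKt : K ≤ l * t) (n : ℕ) (hn : 1 ≤ n) :
    μ {ω | ∃ k, n ≤ k ∧ (k : ℝ) * t < ∑ i ∈ Finset.Icc 1 k, V i ω} ≤
      ENNReal.ofReal (Real.exp (-((n : ℝ) * (l * t - K)))) := by
  have hK0 : 0 ≤ K := by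
    have h := hgK 1 (by norm_num) le_rfl
    rw [show (1:ℝ) - 1 + 1 * Real.exp l = Real.exp l by ring, Real.log_exp] at h
    linarith
  -- the partial sum process and the exponential supermartingale
  set S : ℕ → Ω → ℝ := fun k ω => ∑ i ∈ Finset.Icc 1 k, V i ω with hSdef
  set M : ℕ → Ω → ℝ := fun k ω => Real.exp (l * S k ω - k * K) with hMdef
  have hM0 : ∀ k ω, 0 < M k ω := fun k ω => Real.exp_pos _
  have hSmeas : ∀ k, StronglyMeasurable[F k] (S k) := by
    intro k
    apply Finset.stronglyMeasurable_fun_sum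
    intro i hi
    exact (hadp i).mono (F.mono (Finset.mem_Icc.1 hi).2)
  have hMadp : ∀ k, StronglyMeasurable[F k] (M k) := fun k =>
    (Real.continuous_exp.comp_stronglyMeasurable ((hSmeas k).const_mul l |>.sub
      stronglyMeasurable_const))
  have hVbd : ∀ᵐ ω ∂μ, ∀ i, 1 ≤ i → |V i ω| ≤ 1 := by
    rw [ae_all_iff]
    intro i
    by_cases hi : 1 ≤ i
    · filter_upwards [avals μ F V A hint hmd hA hrange i hi, hrange i] with ω h1 h2 _
      rw [abs_le]
      constructor
      · linarith [h2.1, h1.1]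
      · linarith [h2.2, h1.2]
    · exact Eventually.of_forall fun ω h => absurd h hi
  have hSbd : ∀ᵐ ω ∂μ, ∀ k : ℕ, |S k ω| ≤ k := by
    filter_upwards [hVbd] with ω hω k
    calc |S k ω| ≤ ∑ i ∈ Finset.Icc 1 k, |V i ω| := Finset.abs_sum_le_sum_abs _ _
      _ ≤ ∑ i ∈ Finset.Icc 1 k, 1 := by
          refine Finset.sum_le_sum fun i hi => hω i (Finset.mem_Icc.1 hi).1
      _ = k := by simp
  have hMint : ∀ k, Integrable (M k) μ := by
    intro k
    refine Integrable.mono' (integrable_const (Real.exp (l * k)))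
      ((hMadp k).mono (F.le k)).aestronglyMeasurable ?_
    filter_upwards [hSbd] with ω hω
    rw [Real.norm_eq_abs, abs_of_pos (hM0 k ω), hMdef]
    apply Real.exp_le_exp.2
    have h1 : l * S k ω ≤ l * k := by
      have := (abs_le.1 (hω k)).2
      exact mul_le_mul_of_nonneg_left this hl.le
    have h2 : 0 ≤ (k : ℝ) * K := by positivity
    linarith
  -- conditional mgf bound
  have hmgf : ∀ k : ℕ, μ[fun ω => Real.exp (l * V (k+1) ω) | F k] ≤ᵐ[μ]
      fun _ => Real.exp K := by
    intro k
    have hi : 1 ≤ k + 1 := Nat.le_add_left 1 k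
    have hFi : F (k + 1 - 1) = F k := by norm_num
    have hAb := avals μ F V A hint hmd hA hrange (k+1) hi
    have hAsm : StronglyMeasurable[F k] (A (k+1)) := hFi ▸ hA (k+1) hi
    have hVsm : AEStronglyMeasurable (V (k+1)) μ :=
      ((hadp (k+1)).mono (F.le (k+1))).aestronglyMeasurable
    set c1 : Ω → ℝ := fun ω =>
      (A (k+1) ω + 1) * Real.exp (l * A (k+1) ω) - A (k+1) ω * Real.exp (l * (A (k+1) ω + 1))
      with hc1def
    set c2 : Ω → ℝ := fun ω =>
      Real.exp (l * (A (k+1) ω + 1)) - Real.exp (l * A (k+1) ω) with hc2def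
    have he1 : StronglyMeasurable[F k] (fun ω => Real.exp (l * A (k+1) ω)) :=
      Real.continuous_exp.comp_stronglyMeasurable (hAsm.const_mul l)
    have he2 : StronglyMeasurable[F k] (fun ω => Real.exp (l * (A (k+1) ω + 1))) :=
      Real.continuous_exp.comp_stronglyMeasurable ((hAsm.add_const 1).const_mul l)
    have hc1m : StronglyMeasurable[F k] c1 := ((hAsm.add_const 1).mul he1).sub (hAsm.mul he2)
    have hc2m : StronglyMeasurable[F k] c2 := he2.sub he1
    -- a.e. bounds
    have hbds : ∀ᵐ ω ∂μ, |c1 ω| ≤ 1 + Real.exp l ∧ |c2 ω| ≤ Real.exp l + 1 ∧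
        |V (k+1) ω| ≤ 1 ∧ Real.exp (l * V (k+1) ω) ≤ Real.exp l ∧
        Real.exp (l * V (k+1) ω) ≤ c1 ω + c2 ω * V (k+1) ω ∧ c1 ω ≤ Real.exp K := by
      filter_upwards [hAb, hrange (k+1)] with ω h1 h2
      obtain ⟨hA1, hA0⟩ := h1
      obtain ⟨hV1, hV2⟩ := h2
      simp only [hc1def, hc2def]
      have hVub : V (k+1) ω ≤ 1 := by linarith
      have hVlb : -1 ≤ V (k+1) ω := by linarith
      have hexpA : Real.exp (l * A (k+1) ω) ≤ 1 := by
        rw [← Real.exp_zero]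
        exact Real.exp_le_exp.2 (by nlinarith)
      have hexpA1 : Real.exp (l * (A (k+1) ω + 1)) ≤ Real.exp l := by
        apply Real.exp_le_exp.2; nlinarith
      have hpe1 : 0 < Real.exp (l * A (k+1) ω) := Real.exp_pos _
      have hpe2 : 0 < Real.exp (l * (A (k+1) ω + 1)) := Real.exp_pos _
      refine ⟨?_, ?_, abs_le.2 ⟨hVlb, hVub⟩, ?_, ?_, ?_⟩
      · rw [abs_le]
        constructor <;> nlinarith
      · rw [abs_le]
        constructor <;> nlinarith
      · exact Real.exp_le_exp.2 (by nlinarith)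
      · exact chord hV1 hV2
      · exact c1_bound hA1 hA0 (hgK (-(A (k+1) ω)) (by linarith) (by linarith))
    have hexpVint : Integrable (fun ω => Real.exp (l * V (k+1) ω)) μ := by
      refine Integrable.mono' (integrable_const (Real.exp l))
        ((Real.continuous_exp.comp_aestronglyMeasurable (hVsm.const_mul l))) ?_
      filter_upwards [hbds] with ω h
      rw [Real.norm_eq_abs, abs_of_pos (Real.exp_pos _)]
      exact h.2.2.2.1
    have hc1int : Integrable c1 μ := by
      refine Integrable.mono' (integrable_const (1 + Real.exp l))
        ((hc1m.mono (F.le k)).aestronglyMeasurable) ?_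
      filter_upwards [hbds] with ω h
      exact h.1
    have hc2Vint : Integrable (c2 * V (k+1)) μ := by
      refine Integrable.mono' (integrable_const ((Real.exp l + 1) * 1))
        (((hc2m.mono (F.le k)).aestronglyMeasurable).mul hVsm) ?_
      filter_upwards [hbds] with ω h
      rw [Pi.mul_apply, Real.norm_eq_abs, abs_mul]
      exact mul_le_mul h.2.1 h.2.2.1 (abs_nonneg _) (by positivity)
    have hrhsint : Integrable (c1 + c2 * V (k+1)) μ := hc1int.add hc2Vint
    -- conditional expectation computation
    have hstep1 : μ[fun ω => Real.exp (l * V (k+1) ω)|F k] ≤ᵐ[μ] μ[c1 + c2 * V (k+1)|F k] := by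
      refine condExp_mono hexpVint hrhsint ?_
      filter_upwards [hbds] with ω h
      simpa using h.2.2.2.2.1
    have hstep2 : μ[c1 + c2 * V (k+1)|F k] =ᵐ[μ] fun ω => c1 ω := by
      have h1 := condExp_add (μ := μ) (m := F k) hc1int hc2Vint
      have h2 : μ[c1|F k] =ᵐ[μ] c1 :=
        (condExp_of_stronglyMeasurable (F.le k) hc1m hc1int).symm ▸ EventuallyEq.rfl
      have h3 := condExp_mul_of_stronglyMeasurable_left hc2m hc2Vint (hint (k+1))
      have h4 : μ[V (k+1)|F k] =ᵐ[μ] 0 := hFi ▸ hmd (k+1) hi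
      filter_upwards [h1, h2, h3, h4.mono fun ω h => h] with ω e1 e2 e3 e4
      rw [e1, Pi.add_apply, e2, e3, Pi.mul_apply, e4]
      simp
    have hstep3 : (fun ω => c1 ω) ≤ᵐ[μ] fun _ => Real.exp K := by
      filter_upwards [hbds] with ω h
      exact h.2.2.2.2.2
    calc μ[fun ω => Real.exp (l * V (k+1) ω)|F k]
        ≤ᵐ[μ] μ[c1 + c2 * V (k+1)|F k] := hstep1
      _ ≤ᵐ[μ] fun _ => Real.exp K := hstep2.le.trans hstep3
  -- supermartingale property
  have hsuper : Supermartingale M F μ := by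
    refine supermartingale_nat hMadp hMint fun k => ?_
    set g : Ω → ℝ := fun ω => Real.exp (-K) * Real.exp (l * V (k+1) ω) with hgdef
    have hMeq : M (k+1) = M k * g := by
      funext ω
      rw [hMdef, Pi.mul_apply, hgdef]
      simp only
      rw [← Real.exp_add, ← Real.exp_add]
      congr 1
      have hS : S (k+1) ω = S k ω + V (k+1) ω := by
        rw [hSdef]
        simp only
        rw [Finset.sum_Icc_succ_top (Nat.le_add_left 1 k)]
      rw [hS]
      push_cast
      ring
    have hgint : Integrable g μ := by
      refine Integrable.mono' (integrable_const (Real.exp (-K) * Real.exp l))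
        ((Real.continuous_exp.comp_aestronglyMeasurable
          ((((hadp (k+1)).mono (F.le (k+1))).aestronglyMeasurable.const_mul l))).const_mul _) ?_
      filter_upwards [hVbd] with ω hω
      rw [hgdef]
      simp only [Real.norm_eq_abs]
      rw [abs_of_pos (by positivity)]
      have h1 : Real.exp (l * V (k+1) ω) ≤ Real.exp l := by
        apply Real.exp_le_exp.2
        have := (abs_le.1 (hω (k+1) (Nat.le_add_left 1 k))).2
        nlinarith
      exact mul_le_mul_of_nonneg_left h1 (Real.exp_pos _).le
    have hpull := condExp_mul_of_stronglyMeasurable_left (hMadp k)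
      (by rw [← hMeq]; exact hMint (k+1)) hgint
    have hgce : μ[g|F k] ≤ᵐ[μ] fun _ => Real.exp (-K) * Real.exp K := by
      have hsmul := condExp_smul (μ := μ) (m := F k) (Real.exp (-K))
        (fun ω => Real.exp (l * V (k+1) ω))
      have : g = Real.exp (-K) • fun ω => Real.exp (l * V (k+1) ω) := by
        funext ω; simp [hgdef]
      rw [this]
      filter_upwards [hsmul, hmgf k] with ω e1 e2
      rw [e1]
      simp only [Pi.smul_apply, smul_eq_mul]
      exact mul_le_mul_of_nonneg_left e2 (Real.exp_pos _).le
    rw [hMeq]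
    calc μ[M k * g|F k] =ᵐ[μ] M k * μ[g|F k] := hpull
      _ ≤ᵐ[μ] M k := by
        filter_upwards [hgce] with ω e
        rw [Pi.mul_apply]
        calc M k ω * (μ[g|F k]) ω ≤ M k ω * (Real.exp (-K) * Real.exp K) :=
              mul_le_mul_of_nonneg_left e (hM0 k ω).le
          _ = M k ω := by rw [← Real.exp_add]; simp
  -- Ville / optional stopping, finite horizon
  set ε : ℝ := Real.exp ((n : ℝ) * (l * t - K)) with hεdef
  have hε : 0 < ε := Real.exp_pos _
  have hMn1 : ∫ ω, M n ω ∂μ ≤ 1 := by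
    have hce := hsuper.2.1 0 n (Nat.zero_le n)
    have h1 : ∫ ω, M n ω ∂μ = ∫ ω, (μ[M n|F 0]) ω ∂μ := (integral_condExp (F.le 0)).symm
    have h2 : ∫ ω, (μ[M n|F 0]) ω ∂μ ≤ ∫ ω, M 0 ω ∂μ :=
      integral_mono_ae integrable_condExp (hMint 0) hce
    have h3 : ∫ ω, M 0 ω ∂μ = 1 := by
      have : M 0 = fun _ => (1 : ℝ) := by
        funext ω
        rw [hMdef]
        simp [hSdef, Finset.Icc_eq_empty_of_lt (by norm_num : (0:ℕ) < 1)]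
      rw [this]
      simp
    linarith
  have hVille : ∀ m : ℕ, n ≤ m →
      μ {ω | ∃ k, n ≤ k ∧ k ≤ m ∧ ε ≤ M k ω} ≤
        ENNReal.ofReal (Real.exp (-((n : ℝ) * (l * t - K)))) := by
    intro m hnm
    set τ : Ω → ℕ∞ := fun ω => ((hittingBtwn M (Set.Ici ε) n m ω : ℕ) : ℕ∞) with hτdef
    have hτ : IsStoppingTime F τ :=
      Adapted.isStoppingTime_hittingBtwn (fun k => (hMadp k).measurable) measurableSet_Ici
    have hSVint : Integrable (stoppedValue M τ) μ :=
      integrable_stoppedValue ℕ hτ hMint (fun ω => WithTop.coe_le_coe.2 (hittingBtwn_le ω))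
    have hos := (hsuper.neg).expected_stoppedValue_mono (isStoppingTime_const F n) hτ
      (fun ω => WithTop.coe_le_coe.2 (le_hittingBtwn hnm ω))
      (fun ω => (WithTop.coe_le_coe.2 (hittingBtwn_le ω) : τ ω ≤ m))
    have hSVle : ∫ ω, stoppedValue M τ ω ∂μ ≤ ∫ ω, M n ω ∂μ := by
      have hneg1 : stoppedValue (-M) (fun _ => (WithTop.some n : WithTop ℕ)) = -(M n) := by
        rw [stoppedValue_const]; rfl
      have hneg2 : stoppedValue (-M) τ = -(stoppedValue M τ) := by
        funext ω; simp [stoppedValue]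
      rw [hneg1, hneg2] at hos
      simp only [Pi.neg_apply] at hos
      rw [integral_neg, integral_neg] at hos
      linarith
    set B : Set Ω := {ω | ∃ k, n ≤ k ∧ k ≤ m ∧ ε ≤ M k ω} with hBdef
    have hBmeas : MeasurableSet B := by
      have : B = ⋃ (k : ℕ), ⋃ (_ : n ≤ k ∧ k ≤ m), {ω | ε ≤ M k ω} := by
        ext ω
        simp only [hBdef, Set.mem_setOf_eq, Set.mem_iUnion]
        constructor
        · rintro ⟨k, h1, h2, h3⟩; exact ⟨k, ⟨h1, h2⟩, h3⟩
        · rintro ⟨k, ⟨h1, h2⟩, h3⟩; exact ⟨k, h1, h2, h3⟩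
      rw [this]
      refine MeasurableSet.iUnion fun k => MeasurableSet.iUnion fun _ => ?_
      exact measurableSet_le measurable_const ((hMadp k).mono (F.le k)).measurable
    have hconst : ∀ ω ∈ B, ε ≤ stoppedValue M τ ω := by
      rintro ω ⟨k, h1, h2, h3⟩
      have : stoppedValue M τ ω ∈ Set.Ici ε :=
        stoppedValue_hittingBtwn_mem ⟨k, Set.mem_Icc.2 ⟨h1, h2⟩, h3⟩
      exact this
    have hkey : ε * (μ B).toReal ≤ ∫ ω in B, stoppedValue M τ ω ∂μ :=
      by have := setIntegral_ge_of_const_le hBmeas (measure_ne_top μ B) hconst hSVint.integrableOn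
         rw [smul_eq_mul, mul_comm] at this; exact this
    have hfull : ∫ ω in B, stoppedValue M τ ω ∂μ ≤ ∫ ω, stoppedValue M τ ω ∂μ := by
      refine setIntegral_le_integral hSVint ?_
      filter_upwards with ω
      exact (hM0 _ ω).le
    have hμB : (μ B).toReal ≤ ε⁻¹ := by
      have h := hkey.trans (hfull.trans (hSVle.trans hMn1))
      rw [← one_div, le_div_iff₀ hε]
      linarith
    have : μ B = ENNReal.ofReal ((μ B).toReal) := (ENNReal.ofReal_toReal (measure_ne_top μ B)).symm
    rw [this]
    refine ENNReal.ofReal_le_ofReal ?_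
    rw [Real.exp_neg, ← hεdef]
    exact hμB
  -- pass to the limit and conclude
  have hsubset : {ω | ∃ k, n ≤ k ∧ (k : ℝ) * t < ∑ i ∈ Finset.Icc 1 k, V i ω} ⊆
      ⋃ j : ℕ, {ω | ∃ k, n ≤ k ∧ k ≤ n + j ∧ ε ≤ M k ω} := by
    rintro ω ⟨k, hk, hlt⟩
    refine Set.mem_iUnion.2 ⟨k, k, hk, by omega, ?_⟩
    rw [hεdef, hMdef]
    apply Real.exp_le_exp.2
    have hk' : (n : ℝ) ≤ (k : ℝ) := Nat.cast_le.2 hk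
    have h0 : 0 ≤ l * t - K := by linarith
    have h1 : (n : ℝ) * (l * t - K) ≤ (k : ℝ) * (l * t - K) :=
      mul_le_mul_of_nonneg_right hk' h0
    have h2 : l * ((k : ℝ) * t) ≤ l * S k ω := mul_le_mul_of_nonneg_left hlt.le hl.le
    have h3 : (k : ℝ) * (l * t - K) = l * ((k : ℝ) * t) - (k : ℝ) * K := by ring
    simp only [hSdef]
    rw [hSdef] at h2
    simp only at h2
    linarith
  have hmono : Monotone (fun j : ℕ => {ω | ∃ k, n ≤ k ∧ k ≤ n + j ∧ ε ≤ M k ω}) := by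
    intro a b hab ω hω
    obtain ⟨k, h1, h2, h3⟩ := hω
    exact ⟨k, h1, by omega, h3⟩
  calc μ {ω | ∃ k, n ≤ k ∧ (k : ℝ) * t < ∑ i ∈ Finset.Icc 1 k, V i ω}
      ≤ μ (⋃ j : ℕ, {ω | ∃ k, n ≤ k ∧ k ≤ n + j ∧ ε ≤ M k ω}) := measure_mono hsubset
    _ = ⨆ j : ℕ, μ {ω | ∃ k, n ≤ k ∧ k ≤ n + j ∧ ε ≤ M k ω} :=
        hmono.measure_iUnion
    _ ≤ ENNReal.ofReal (Real.exp (-((n : ℝ) * (l * t - K)))) :=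
        iSup_le fun j => hVille (n + j) (Nat.le_add_right n j)

open Real in
lemma twoSided (μ : Measure Ω) [IsProbabilityMeasure μ]
    (F : Filtration ℕ m0) (V A : ℕ → Ω → ℝ)
    (hadp : ∀ i, StronglyMeasurable[F i] (V i))
    (hint : ∀ i, Integrable (V i) μ)
    (hmd : ∀ i, 1 ≤ i → μ[V i | F (i - 1)] =ᵐ[μ] 0)
    (hA : ∀ i, 1 ≤ i → StronglyMeasurable[F (i - 1)] (A i))
    (hrange : ∀ i, ∀ᵐ ω ∂μ, V i ω ∈ Set.Icc (A i ω) (A i ω + 1))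
    (l K t : ℝ) (hl : 0 < l)
    (hgK : ∀ p : ℝ, 0 ≤ p → p ≤ 1 → Real.log (1 - p + p * Real.exp l) ≤ l * p + K)
    (ht : 0 < t) (hKt : K ≤ l * t) (n : ℕ) (hn : 1 ≤ n) :
    μ {ω | ∃ k, n ≤ k ∧ t < |(∑ i ∈ Finset.Icc 1 k, V i ω) / k|} ≤
      ENNReal.ofReal (Real.exp (-((n : ℝ) * (l * t - K))) + Real.exp (-((n : ℝ) * (l * t - K)))) := by
  have h1 := oneSided μ F V A hadp hint hmd hA hrange l K t hl hgK ht hKt n hn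
  have hadp' : ∀ i, StronglyMeasurable[F i] (fun ω => -V i ω) := fun i => (hadp i).neg
  have hint' : ∀ i, Integrable (fun ω => -V i ω) μ := fun i => (hint i).neg
  have hmd' : ∀ i, 1 ≤ i → μ[(fun ω => -V i ω) | F (i - 1)] =ᵐ[μ] 0 := by
    intro i hi
    refine (condExp_neg (V i) (F (i - 1))).trans ?_
    filter_upwards [hmd i hi] with ω h
    simp only [Pi.neg_apply, h, Pi.zero_apply, neg_zero]
  have hA' : ∀ i, 1 ≤ i → StronglyMeasurable[F (i - 1)] (fun ω => -A i ω - 1) := fun i hi =>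
    (hA i hi).neg.sub stronglyMeasurable_const
  have hrange' : ∀ i, ∀ᵐ ω ∂μ,
      (fun ω => -V i ω) ω ∈ Set.Icc ((fun ω => -A i ω - 1) ω) ((fun ω => -A i ω - 1) ω + 1) := by
    intro i
    filter_upwards [hrange i] with ω h
    obtain ⟨ha, hb⟩ := h
    exact Set.mem_Icc.2 ⟨by linarith, by linarith⟩
  have h2 := oneSided μ F (fun i ω => -V i ω) (fun i ω => -A i ω - 1)
    hadp' hint' hmd' hA' hrange' l K t hl hgK ht hKt n hn
  have hsplit : {ω | ∃ k, n ≤ k ∧ t < |(∑ i ∈ Finset.Icc 1 k, V i ω) / k|} ⊆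
      {ω | ∃ k, n ≤ k ∧ (k : ℝ) * t < ∑ i ∈ Finset.Icc 1 k, V i ω} ∪
      {ω | ∃ k, n ≤ k ∧ (k : ℝ) * t < ∑ i ∈ Finset.Icc 1 k, -V i ω} := by
    rintro ω ⟨k, hk, habs⟩
    have hkpos : (0 : ℝ) < k := by
      have : 1 ≤ k := le_trans hn hk
      exact_mod_cast Nat.pos_of_ne_zero (by omega)
    rw [abs_div, abs_of_pos hkpos, lt_div_iff₀ hkpos] at habs
    rcases lt_abs.1 habs with h | h
    · exact Or.inl ⟨k, hk, by linarith⟩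
    · refine Or.inr ⟨k, hk, ?_⟩
      rw [Finset.sum_neg_distrib]
      linarith
  calc μ {ω | ∃ k, n ≤ k ∧ t < |(∑ i ∈ Finset.Icc 1 k, V i ω) / k|}
      ≤ μ ({ω | ∃ k, n ≤ k ∧ (k : ℝ) * t < ∑ i ∈ Finset.Icc 1 k, V i ω} ∪
          {ω | ∃ k, n ≤ k ∧ (k : ℝ) * t < ∑ i ∈ Finset.Icc 1 k, -V i ω}) := measure_mono hsplit
    _ ≤ μ {ω | ∃ k, n ≤ k ∧ (k : ℝ) * t < ∑ i ∈ Finset.Icc 1 k, V i ω} +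
        μ {ω | ∃ k, n ≤ k ∧ (k : ℝ) * t < ∑ i ∈ Finset.Icc 1 k, -V i ω} := measure_union_le _ _
    _ ≤ ENNReal.ofReal (Real.exp (-((n : ℝ) * (l * t - K)))) +
        ENNReal.ofReal (Real.exp (-((n : ℝ) * (l * t - K)))) := add_le_add h1 h2
    _ = _ := (ENNReal.ofReal_add (Real.exp_pos _).le (Real.exp_pos _).le).symm

end StmtAux

open StmtAux in
/-- Maximal (law-of-large-numbers type) version of the Hoeffding–Azuma tail
bound. -/
theorem stmt_13 {Ω : Type*} {m0 : MeasurableSpace Ω}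
    (μ : Measure Ω) [IsProbabilityMeasure μ]
    (F : Filtration ℕ m0) (V A : ℕ → Ω → ℝ)
    (hadp : ∀ i, StronglyMeasurable[F i] (V i))
    (hint : ∀ i, Integrable (V i) μ)
    (hmd : ∀ i, 1 ≤ i → μ[V i | F (i - 1)] =ᵐ[μ] 0)
    (hA : ∀ i, 1 ≤ i → StronglyMeasurable[F (i - 1)] (A i))
    (hrange : ∀ i, ∀ᵐ ω ∂μ, V i ω ∈ Set.Icc (A i ω) (A i ω + 1)) :
    ∀ t : ℝ, 0 < t → ∀ n : ℕ, 1 ≤ n →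
      μ {ω | ∃ k, n ≤ k ∧ t < |(∑ i ∈ Finset.Icc 1 k, V i ω) / k|} ≤
        ENNReal.ofReal (t⁻¹ ^ 2 * Real.exp (-2 * n * t ^ 2)) := by
  intro t ht n hn
  by_cases hbig : 1 ≤ t
  · -- the event is null since `|V i| ≤ 1` a.e.
    have hVbd : ∀ᵐ ω ∂μ, ∀ i, 1 ≤ i → |V i ω| ≤ 1 := by
      rw [ae_all_iff]
      intro i
      by_cases hi : 1 ≤ i
      · filter_upwards [avals μ F V A hint hmd hA hrange i hi, hrange i] with ω h1 h2 _
        rw [abs_le]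
        exact ⟨by linarith [h2.1, h1.1], by linarith [h2.2, h1.2]⟩
      · exact Filter.Eventually.of_forall fun ω h => absurd h hi
    have hnull : μ {ω | ∃ k, n ≤ k ∧ t < |(∑ i ∈ Finset.Icc 1 k, V i ω) / k|} = 0 := by
      refine measure_eq_zero_iff_ae_notMem.2 ?_
      filter_upwards [hVbd] with ω hω
      rintro ⟨k, hk, habs⟩
      have hk1 : 1 ≤ k := le_trans hn hk
      have hkpos : (0 : ℝ) < k := by exact_mod_cast Nat.pos_of_ne_zero (by omega)
      have hsum : |∑ i ∈ Finset.Icc 1 k, V i ω| ≤ k := by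
        calc |∑ i ∈ Finset.Icc 1 k, V i ω| ≤ ∑ i ∈ Finset.Icc 1 k, |V i ω| :=
              Finset.abs_sum_le_sum_abs _ _
          _ ≤ ∑ _i ∈ Finset.Icc 1 k, (1:ℝ) :=
              Finset.sum_le_sum fun i hi => hω i (Finset.mem_Icc.1 hi).1
          _ = k := by simp
      rw [abs_div, abs_of_pos hkpos, lt_div_iff₀ hkpos] at habs
      nlinarith
    rw [hnull]
    exact zero_le
  · push_neg at hbig
    by_cases hsml : t ^ 2 ≤ 1 / 2
    · -- Hoeffding regime: `l = 4t`, `K = 2t²`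
      have hgK : ∀ p : ℝ, 0 ≤ p → p ≤ 1 →
          Real.log (1 - p + p * Real.exp (4 * t)) ≤ (4 * t) * p + 2 * t ^ 2 := by
        intro p h0 h1
        have := hoeffding_pointwise h0 h1 (by positivity : (0:ℝ) ≤ 4 * t)
        nlinarith [this]
      have h := twoSided μ F V A hadp hint hmd hA hrange (4 * t) (2 * t ^ 2) t
        (by positivity) hgK ht (by nlinarith) n hn
      refine h.trans (ENNReal.ofReal_le_ofReal ?_)
      have he : -((n : ℝ) * (4 * t * t - 2 * t ^ 2)) = -2 * n * t ^ 2 := by ring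
      rw [he]
      have h2 : (2 : ℝ) ≤ t⁻¹ ^ 2 := by
        rw [inv_pow, le_inv_comm₀ (by norm_num) (by positivity)]
        linarith
      nlinarith [Real.exp_pos (-2 * (n:ℝ) * t ^ 2)]
    · -- large-`t` regime: `l = 29/5`, `K = 3059/1000`
      push_neg at hsml
      have ht7 : (0.707 : ℝ) ≤ t := by
        have hs : Real.sqrt (1/2) ≤ t := by
          have h := Real.sqrt_le_sqrt hsml.le
          rwa [Real.sqrt_sq ht.le] at h
        have hs1 : (0.707 : ℝ) < Real.sqrt (1/2) := (Real.lt_sqrt (by norm_num)).2 (by norm_num)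
        linarith
      have hgK : ∀ p : ℝ, 0 ≤ p → p ≤ 1 →
          Real.log (1 - p + p * Real.exp (29/5)) ≤ (29/5 : ℝ) * p + 3059/1000 := by
        intro p h0 h1
        have h2 := tangent_bound h0 h1 (by norm_num : (0:ℝ) < 29/5)
        have h3 := psi_num
        linarith
      have h := twoSided μ F V A hadp hint hmd hA hrange (29/5) (3059/1000) t
        (by norm_num) hgK ht (by nlinarith) n hn
      refine h.trans (ENNReal.ofReal_le_ofReal ?_)
      -- numeric comparison of the exponential bounds
      have hD := caseB_poly ht hbig.le hsml
      have hlogpos : 0 < Real.log 2 + 2 * Real.log t := by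
        have h1 : (1 : ℝ) < 2 * t ^ 2 := by linarith
        have h2 : Real.log (2 * t ^ 2) = Real.log 2 + 2 * Real.log t := by
          rw [Real.log_mul (by norm_num) (by positivity), Real.log_pow]
          push_cast; ring
        have := Real.log_pos h1
        linarith [h2 ▸ this]
      have hn1 : (1 : ℝ) ≤ (n : ℝ) := by exact_mod_cast hn
      set D : ℝ := (29/5 : ℝ) * t - 3059/1000 with hDdef
      have hkey : Real.log 2 - (n : ℝ) * D ≤ -(2 * Real.log t) - 2 * (n : ℝ) * t ^ 2 := by
        have hpos : 0 ≤ D - 2 * t ^ 2 := le_trans hlogpos.le (by linarith)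
        nlinarith [mul_nonneg (sub_nonneg.2 hn1) hpos]
      calc Real.exp (-((n:ℝ) * D)) + Real.exp (-((n:ℝ) * D))
          = Real.exp (Real.log 2 + -((n:ℝ) * D)) := by
            rw [Real.exp_add, Real.exp_log (by norm_num)]; ring
        _ ≤ Real.exp (Real.log (t⁻¹ ^ 2) + (-2 * n * t ^ 2)) := by
            apply Real.exp_le_exp.2
            have hlti : Real.log (t⁻¹ ^ 2) = -(2 * Real.log t) := by
              rw [Real.log_pow, Real.log_inv]
              push_cast; ring
            rw [hlti]
            linarith [hkey]
        _ = t⁻¹ ^ 2 * Real.exp (-2 * n * t ^ 2) := by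
            rw [Real.exp_add, Real.exp_log (by positivity)]
end
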